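/- arXiv:1302.2018 — 2 statements merged into one kernel-verified Lean document; each statement's English description precedes it below -/
import Mathlib

section
/- Let λ ∈ [1/2, 1]. Let F(z) = z + Σ_{k=1}^2 |z|^{2(k-1)} Σ_{n=2}^∞ (a_{n,k} z^n + conj(b_{n,k}) conj(z)^n) be a polyharmonic mapping of class HS_2^0(λ), and let H(z) = z + Σ_{k=1}^2 |z|^{2(k-1)} Σ_{n=2}^∞ (A_{n,k} z^n + conj(B_{n,k}) conj(z)^n) be a polyharmonic mapping whose coefficients satisfy |A_{n,k}| ≤ (n+1)/2 and |B_{n,k}| ≤ (n−1)/2 for all n ≥ 2 and k ∈ {1,2}. Then the integral convolution (F⋄H)(z) = z + Σ_{k=1}^2 |z|^{2(k-1)} Σ_{n=2}^∞ ((a_{n,k} A_{n,k}/n) z^n + conj(b_{n,k} B_{n,k}/n) conj(z)^n) belongs to HC_2^0, i.e., Σ_{k=1}^2 Σ_{n=2}^∞ (2(k−1) + n²)(|a_{n,k} A_{n,k}| + |b_{n,k} B_{n,k}|)/n ≤ 1; moreover, if λ = 1, then the convolution (F∗H)(z) = z + Σ_{k=1}^2 |z|^{2(k-1)} Σ_{n=2}^∞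 (a_{n,k} A_{n,k} z^n + conj(b_{n,k} B_{n,k}) conj(z)^n) satisfies Σ_{k=1}^2 Σ_{n=2}^∞ (2(k−1) + n)(|a_{n,k} A_{n,k}| + |b_{n,k} B_{n,k}|) ≤ 1, i.e., F∗H belongs to HS_2^0. -/
open Complex Metric Set

/-- The polyharmonic mapping associated to coefficients `a b : ℕ → ℕ → ℂ`
(`a n k` is the coefficient `a_{n,k}`):
`F(z) = Σ_{k=1}^p |z|^{2(k-1)} Σ_{n=1}^∞ (a_{n,k} z^n + conj(b_{n,k}) conj(z)^n)`. -/
noncomputable def polyF (p : ℕ) (a b : ℕ → ℕ → ℂ) (z : ℂ) : ℂ :=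
  ∑ k ∈ Finset.Icc 1 p, (((‖z‖ : ℝ) : ℂ)) ^ (2 * (k - 1)) *
    ∑' n : ℕ, if 1 ≤ n then
      a n k * z ^ n + (starRingEnd ℂ) (b n k) * ((starRingEnd ℂ) z) ^ n else 0

/-- The coefficient conditions defining the class `HS_p(λ)`. -/
def HSLam (p : ℕ) (lam : ℝ) (a b : ℕ → ℕ → ℂ) : Prop :=
  a 1 1 = 1 ∧
  (∀ k ∈ Finset.Icc 1 p,
    Summable (fun n : ℕ => ‖a n k‖ + ‖b n k‖)) ∧
  (∀ k ∈ Finset.Icc 1 p, Summable (fun n : ℕ =>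
    if 2 ≤ n then (2 * ((k : ℝ) - 1) + n * (lam * n + 1 - lam)) *
      (‖a n k‖ + ‖b n k‖) else 0)) ∧
  (∑ k ∈ Finset.Icc 1 p, ∑' n : ℕ,
      (if 2 ≤ n then (2 * ((k : ℝ) - 1) + n * (lam * n + 1 - lam)) *
        (‖a n k‖ + ‖b n k‖) else 0))
    ≤ 2 - ∑ k ∈ Finset.Icc 1 p,
        (2 * (k : ℝ) - 1) * (‖a 1 k‖ + ‖b 1 k‖) ∧
  1 ≤ ∑ k ∈ Finset.Icc 1 p,
        (2 * (k : ℝ) - 1) * (‖a 1 k‖ + ‖b 1 k‖) ∧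
  ∑ k ∈ Finset.Icc 1 p,
        (2 * (k : ℝ) - 1) * (‖a 1 k‖ + ‖b 1 k‖) < 2

/-- The coefficient conditions defining the class `HS_p^0(λ)`. -/
def HSLam0 (p : ℕ) (lam : ℝ) (a b : ℕ → ℕ → ℂ) : Prop :=
  HSLam p lam a b ∧ b 1 1 = 0 ∧ ∀ k, 2 ≤ k → k ≤ p → a 1 k = 0 ∧ b 1 k = 0

lemma key1 (c n lam x y X Y : ℝ) (hc0 : 0 ≤ c) (hc2 : c ≤ 2) (hn : 2 ≤ n)
    (hx : 0 ≤ x) (hy : 0 ≤ y)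
    (hX : X ≤ (n+1)/2) (hY : Y ≤ (n-1)/2) (hl : 1/2 ≤ lam) :
    (c + n^2) * (x*X + y*Y) / n ≤ (c + n*(lam*n+1-lam)) * (x+y) := by
  rw [div_le_iff₀ (by linarith : (0:ℝ) < n)]
  have h1 : x*X ≤ x*((n+1)/2) := mul_le_mul_of_nonneg_left hX hx
  have h2 : y*Y ≤ y*((n-1)/2) := mul_le_mul_of_nonneg_left hY hy
  nlinarith [mul_nonneg hx (by linarith : (0:ℝ) ≤ n-1), mul_nonneg hy (by linarith : (0:ℝ) ≤ n-1),
    mul_nonneg (mul_nonneg hx (by linarith : (0:ℝ) ≤ n-1)) (by linarith : (0:ℝ) ≤ lam - 1/2),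
    mul_nonneg (mul_nonneg hy (by linarith : (0:ℝ) ≤ n-1)) (by linarith : (0:ℝ) ≤ lam - 1/2),
    mul_nonneg (mul_nonneg (mul_nonneg hx (by linarith : (0:ℝ) ≤ n-1)) (by linarith : (0:ℝ) ≤ lam - 1/2)) (by linarith : (0:ℝ) ≤ n),
    mul_nonneg (mul_nonneg (mul_nonneg hy (by linarith : (0:ℝ) ≤ n-1)) (by linarith : (0:ℝ) ≤ lam - 1/2)) (by linarith : (0:ℝ) ≤ n),
    mul_nonneg (mul_nonneg hx (by linarith : (0:ℝ) ≤ n-1)) (by linarith : (0:ℝ) ≤ 2 - c),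
    mul_nonneg (mul_nonneg hy (by linarith : (0:ℝ) ≤ n-1)) (by linarith : (0:ℝ) ≤ 2 - c)]

lemma key2 (c n x y X Y : ℝ) (hc0 : 0 ≤ c) (hc2 : c ≤ 2) (hn : 2 ≤ n)
    (hx : 0 ≤ x) (hy : 0 ≤ y)
    (hX : X ≤ (n+1)/2) (hY : Y ≤ (n-1)/2) :
    (c + n) * (x*X + y*Y) ≤ (c + n*(1*n+1-1)) * (x+y) := by
  have h1 : x*X ≤ x*((n+1)/2) := mul_le_mul_of_nonneg_left hX hx
  have h2 : y*Y ≤ y*((n-1)/2) := mul_le_mul_of_nonneg_left hY hy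
  nlinarith [mul_nonneg hx (by linarith : (0:ℝ) ≤ n-2), mul_nonneg hy (by linarith : (0:ℝ) ≤ n-2),
    mul_nonneg (mul_nonneg hx (by linarith : (0:ℝ) ≤ n-1)) (by linarith : (0:ℝ) ≤ 2-c),
    mul_nonneg (mul_nonneg hy (by linarith : (0:ℝ) ≤ n-1)) (by linarith : (0:ℝ) ≤ 2-c),
    mul_nonneg (mul_nonneg hx (by linarith : (0:ℝ) ≤ n-2)) (by linarith : (0:ℝ) ≤ n),
    mul_nonneg (mul_nonneg hy (by linarith : (0:ℝ) ≤ n-2)) (by linarith : (0:ℝ) ≤ n)]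

/-- If `F ∈ HS_2^0(λ)` with `1/2 ≤ λ ≤ 1` and the coefficients of the biharmonic
mapping `H` satisfy `|A_{n,k}| ≤ (n+1)/2`, `|B_{n,k}| ≤ (n−1)/2`, then the integral
convolution `F⋄H` belongs to `HC_2^0`; moreover, if `λ = 1` then the convolution
`F∗H` belongs to `HS_2^0`. -/
theorem biharmonic_convolutions
    (lam : ℝ) (hlam : lam ∈ Set.Icc (1 / 2 : ℝ) 1)
    (a b A B : ℕ → ℕ → ℂ) (hF : HSLam0 2 lam a b)
    (hAB : ∀ n k : ℕ, 2 ≤ n → 1 ≤ k → k ≤ 2 →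
      ‖A n k‖ ≤ ((n : ℝ) + 1) / 2 ∧ ‖B n k‖ ≤ ((n : ℝ) - 1) / 2) :
    (∑ k ∈ Finset.Icc (1 : ℕ) 2, ∑' n : ℕ,
        (if 2 ≤ n then (2 * ((k : ℝ) - 1) + (n : ℝ) ^ 2) *
          (‖a n k * A n k‖ + ‖b n k * B n k‖) / n else 0) ≤ 1) ∧
    (lam = 1 → ∑ k ∈ Finset.Icc (1 : ℕ) 2, ∑' n : ℕ,
        (if 2 ≤ n then (2 * ((k : ℝ) - 1) + (n : ℝ)) *
          (‖a n k * A n k‖ + ‖b n k * B n k‖) else 0) ≤ 1) := by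
  obtain ⟨⟨ha11, hsum1, hsum2, hbound, -, -⟩, hb11, h1k⟩ := hF
  obtain ⟨ha12, hb12⟩ := h1k 2 le_rfl le_rfl
  have hone : (∑ k ∈ Finset.Icc (1:ℕ) 2,
      (2*(k:ℝ)-1)*(‖a 1 k‖+‖b 1 k‖)) = 1 := by
    rw [show (Finset.Icc (1:ℕ) 2) = {1,2} from rfl]
    norm_num [ha11, hb11, ha12, hb12]
  rw [hone] at hbound
  have h21 : (2:ℝ) - 1 = 1 := by norm_num
  rw [h21] at hbound
  obtain ⟨hl2, hl1⟩ := hlam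
  constructor
  · refine le_trans ?_ hbound
    refine Finset.sum_le_sum fun k hk => ?_
    obtain ⟨hk1, hk2⟩ := Finset.mem_Icc.mp hk
    have hc0 : (0:ℝ) ≤ 2*((k:ℝ)-1) := by
      have : (1:ℝ) ≤ (k:ℝ) := by exact_mod_cast hk1
      linarith
    have hc2 : 2*((k:ℝ)-1) ≤ 2 := by
      have : (k:ℝ) ≤ 2 := by exact_mod_cast hk2
      linarith
    have hterm : ∀ n : ℕ,
        (if 2 ≤ n then (2 * ((k : ℝ) - 1) + (n : ℝ) ^ 2) *
          (‖a n k * A n k‖ + ‖b n k * B n k‖) / n else 0) ≤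
        (if 2 ≤ n then (2 * ((k : ℝ) - 1) + n * (lam * n + 1 - lam)) *
          (‖a n k‖ + ‖b n k‖) else 0) := by
      intro n
      split
      · next hn =>
        have hn2 : (2:ℝ) ≤ (n:ℝ) := by exact_mod_cast hn
        obtain ⟨hA, hB⟩ := hAB n k hn hk1 hk2
        rw [norm_mul, norm_mul]
        exact key1 _ _ _ _ _ _ _ hc0 hc2 hn2 (norm_nonneg _) (norm_nonneg _)
          hA hB hl2
      · exact le_rfl
    have hnn : ∀ n : ℕ, 0 ≤
        (if 2 ≤ n then (2 * ((k : ℝ) - 1) + (n : ℝ) ^ 2) *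
          (‖a n k * A n k‖ + ‖b n k * B n k‖) / n else 0) := by
      intro n
      split
      · apply div_nonneg _ (Nat.cast_nonneg n)
        apply mul_nonneg (by positivity)
        exact add_nonneg (norm_nonneg _) (norm_nonneg _)
      · exact le_rfl
    exact Summable.tsum_le_tsum hterm (Summable.of_nonneg_of_le hnn hterm (hsum2 k hk)) (hsum2 k hk)
  · intro hl
    subst hl
    refine le_trans ?_ hbound
    refine Finset.sum_le_sum fun k hk => ?_
    obtain ⟨hk1, hk2⟩ := Finset.mem_Icc.mp hk
    have hc0 : (0:ℝ) ≤ 2*((k:ℝ)-1) := by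
      have : (1:ℝ) ≤ (k:ℝ) := by exact_mod_cast hk1
      linarith
    have hc2 : 2*((k:ℝ)-1) ≤ 2 := by
      have : (k:ℝ) ≤ 2 := by exact_mod_cast hk2
      linarith
    have hterm : ∀ n : ℕ,
        (if 2 ≤ n then (2 * ((k : ℝ) - 1) + (n : ℝ)) *
          (‖a n k * A n k‖ + ‖b n k * B n k‖) else 0) ≤
        (if 2 ≤ n then (2 * ((k : ℝ) - 1) + n * ((1:ℝ) * n + 1 - 1)) *
          (‖a n k‖ + ‖b n k‖) else 0) := by
      intro n
      split
      · next hn =>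
        have hn2 : (2:ℝ) ≤ (n:ℝ) := by exact_mod_cast hn
        obtain ⟨hA, hB⟩ := hAB n k hn hk1 hk2
        rw [norm_mul, norm_mul]
        exact key2 _ _ _ _ _ _ hc0 hc2 hn2 (norm_nonneg _) (norm_nonneg _) hA hB
      · exact le_rfl
    have hnn : ∀ n : ℕ, 0 ≤
        (if 2 ≤ n then (2 * ((k : ℝ) - 1) + (n : ℝ)) *
          (‖a n k * A n k‖ + ‖b n k * B n k‖) else 0) := by
      intro n
      split
      · apply mul_nonneg (by positivity)
        exact add_nonneg (norm_nonneg _) (norm_nonneg _)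
      · exact le_rfl
    exact Summable.tsum_le_tsum hterm (Summable.of_nonneg_of_le hnn hterm (hsum2 k hk)) (hsum2 k hk)
end

section
/- Let p ≥ 1 be an integer, λ ∈ [0,1/2], and let F be a polyharmonic mapping of class HS_p(λ) with coefficients a_{n,k}, b_{n,k}. Then Σ_{k=1}^p Σ_{n=2}^∞ (|a_{n,k}| + |b_{n,k}|) + Σ_{k=2}^p (|a_{1,k}| + |b_{1,k}|) ≤ (1 − |b_{1,1}|)/(2(1+λ)). -/
open Complex Metric Set

/-- Coefficient bound for `F ∈ HS_p(λ)` with `0 ≤ λ ≤ 1/2`. -/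
theorem coefficient_sum_bound_small_lambda
    (p : ℕ) (hp : 1 ≤ p) (lam : ℝ) (hlam : lam ∈ Set.Icc (0 : ℝ) (1 / 2))
    (a b : ℕ → ℕ → ℂ) (hF : HSLam p lam a b) :
    ∑ k ∈ Finset.Icc 1 p, ∑' n : ℕ,
        (if 2 ≤ n then ‖a n k‖ + ‖b n k‖ else 0)
      + ∑ k ∈ Finset.Icc 2 p, (‖a 1 k‖ + ‖b 1 k‖)
      ≤ (1 - ‖b 1 1‖) / (2 * (1 + lam)) := by
  obtain ⟨ha11, hsum, hsum2, hbig, hlow, hup⟩ := hF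
  obtain ⟨hl0, hl2⟩ := hlam
  have hcpos : (0 : ℝ) < 2 * (1 + lam) := by nlinarith
  rw [le_div_iff₀ hcpos]
  -- per-k estimate for the tail sums
  have key : ∀ k ∈ Finset.Icc 1 p,
      (2 * (1 + lam)) * ∑' n : ℕ,
        (if 2 ≤ n then ‖a n k‖ + ‖b n k‖ else 0)
      ≤ ∑' n : ℕ, (if 2 ≤ n then
          (2 * ((k : ℝ) - 1) + n * (lam * n + 1 - lam)) *
            (‖a n k‖ + ‖b n k‖) else 0) := by
    intro k hk
    have hk1 : 1 ≤ k := (Finset.mem_Icc.mp hk).1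
    have hfs : Summable (fun n : ℕ =>
        (if 2 ≤ n then ‖a n k‖ + ‖b n k‖ else 0)) := by
      apply Summable.of_nonneg_of_le _ _ (hsum k hk)
      · intro n; split <;> positivity
      · intro n; split
        · exact le_rfl
        · positivity
    rw [← tsum_mul_left]
    apply Summable.tsum_le_tsum _ (hfs.mul_left _) (hsum2 k hk)
    intro n
    by_cases hn : 2 ≤ n
    · simp only [hn, if_true]
      apply mul_le_mul_of_nonneg_right _ (by positivity)
      have hk1' : (1 : ℝ) ≤ (k : ℝ) := by exact_mod_cast hk1
      have hn1' : (2 : ℝ) ≤ (n : ℝ) := by exact_mod_cast hn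
      nlinarith [mul_nonneg hl0 (mul_nonneg (sub_nonneg.mpr hn1')
        (by linarith : (0:ℝ) ≤ (n:ℝ) + 2))]
    · simp [hn]
  have h1 : (2 * (1 + lam)) * ∑ k ∈ Finset.Icc 1 p, ∑' n : ℕ,
        (if 2 ≤ n then ‖a n k‖ + ‖b n k‖ else 0)
      ≤ ∑ k ∈ Finset.Icc 1 p, ∑' n : ℕ, (if 2 ≤ n then
          (2 * ((k : ℝ) - 1) + n * (lam * n + 1 - lam)) *
            (‖a n k‖ + ‖b n k‖) else 0) := by
    rw [Finset.mul_sum]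
    exact Finset.sum_le_sum key
  have h2 : (2 * (1 + lam)) * ∑ k ∈ Finset.Icc 2 p,
        (‖a 1 k‖ + ‖b 1 k‖)
      ≤ ∑ k ∈ Finset.Icc 2 p,
        (2 * (k : ℝ) - 1) * (‖a 1 k‖ + ‖b 1 k‖) := by
    rw [Finset.mul_sum]
    apply Finset.sum_le_sum
    intro k hk
    have hk2 : 2 ≤ k := (Finset.mem_Icc.mp hk).1
    have hk2' : (2 : ℝ) ≤ (k : ℝ) := by exact_mod_cast hk2
    apply mul_le_mul_of_nonneg_right _ (by positivity)
    linarith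
  have hsplit : Finset.Icc 1 p = insert 1 (Finset.Icc 2 p) := by
    ext x; simp [Finset.mem_Icc]; omega
  have hnotmem : 1 ∉ Finset.Icc 2 p := by simp
  have hsum1 : ∑ k ∈ Finset.Icc 1 p,
        (2 * (k : ℝ) - 1) * (‖a 1 k‖ + ‖b 1 k‖)
      = (1 + ‖b 1 1‖) + ∑ k ∈ Finset.Icc 2 p,
        (2 * (k : ℝ) - 1) * (‖a 1 k‖ + ‖b 1 k‖) := by
    rw [hsplit, Finset.sum_insert hnotmem, ha11]
    norm_num
  rw [hsum1] at hbig
  nlinarith [h1, h2, hbig]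
end
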